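/- Fix a real κ with 1 < κ < 2. For a > 1, define λ_a := √((κ−1)a + 1) − 1, λ̃_a := λ_a/(1+λ_a), Z*_a := (λ_a·(κa − λ_a)/a − λ_a)/(1 + λ_a), and Z̃_a := (λ̃_a·(κa − λ̃_a)/a − λ̃_a)/(1 + λ̃_a). Then, as a → ∞, Z*_a → κ − 1, Z̃_a → (κ−1)/2, and consequently Z̃_a / Z*_a → 1/2. -/

import Mathlib

open Filter

/-- Optimal arrival rate `λ_a = √((κ−1)a+1) − 1` of the tightness instance. -/
noncomputable def lamStar (κ a : ℝ) : ℝ := Real.sqrt ((κ - 1) * a + 1) - 1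

/-- Average arrival rate `λ̃_a = λ_a/(1+λ_a)` of the optimal policy. -/
noncomputable def lamTilde (κ a : ℝ) : ℝ := lamStar κ a / (1 + lamStar κ a)

/-- Objective value `Z*_a` of the optimal dynamic policy. -/
noncomputable def Zstar (κ a : ℝ) : ℝ :=
  (lamStar κ a * (κ * a - lamStar κ a) / a - lamStar κ a) / (1 + lamStar κ a)

/-- Objective value `Z̃_a` of the static policy `π^{λ̃,0}`. -/
noncomputable def Ztilde (κ a : ℝ) : ℝ :=
  (lamTilde κ a * (κ * a - lamTilde κ a) / a - lamTilde κ a) / (1 + lamTilde κ a)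

/-- Tightness of the 1/2 guarantee (Section 3.4): as `a → ∞`,
`Z*_a → κ − 1`, `Z̃_a → (κ−1)/2`, and `Z̃_a/Z*_a → 1/2`. -/
theorem tightness_limits (κ : ℝ) (h1 : 1 < κ) (h2 : κ < 2) :
    Tendsto (fun a => Zstar κ a) atTop (nhds (κ - 1)) ∧
      Tendsto (fun a => Ztilde κ a) atTop (nhds ((κ - 1) / 2)) ∧
      Tendsto (fun a => Ztilde κ a / Zstar κ a) atTop (nhds (1 / 2)) := by
  have hc0 : 0 < κ - 1 := by linarith
  have hinv : Tendsto (fun a : ℝ => 1 / a) atTop (nhds 0) := by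
    simpa [one_div] using tendsto_inv_atTop_zero
  -- A: lamStar → atTop
  have hA : Tendsto (fun a => lamStar κ a) atTop atTop := by
    have h1' : Tendsto (fun a : ℝ => (κ - 1) * a + 1) atTop atTop :=
      tendsto_atTop_add_const_right _ 1 (tendsto_id.const_mul_atTop hc0)
    have hsq : Tendsto Real.sqrt atTop atTop := by
      refine tendsto_atTop.2 fun b => ?_
      filter_upwards [eventually_ge_atTop (b ^ 2)] with x hx
      calc b ≤ |b| := le_abs_self b
        _ = Real.sqrt (b ^ 2) := (Real.sqrt_sq_eq_abs b).symm
        _ ≤ Real.sqrt x := Real.sqrt_le_sqrt hx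
    have h2' : Tendsto (fun a : ℝ => Real.sqrt ((κ - 1) * a + 1)) atTop atTop :=
      hsq.comp h1'
    simpa [lamStar, sub_eq_add_neg] using tendsto_atTop_add_const_right _ (-1) h2'
  -- basic eventual facts
  have hpos2 : ∀ᶠ a : ℝ in atTop, 0 < a ∧ 0 < lamStar κ a := by
    filter_upwards [eventually_gt_atTop (0:ℝ), hA.eventually (eventually_gt_atTop 0)]
      with a ha hl using ⟨ha, hl⟩
  -- B: lamStar/a → 0
  have hB : Tendsto (fun a => lamStar κ a / a) atTop (nhds 0) := by
    have heq : ∀ᶠ a : ℝ in atTop,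
        Real.sqrt ((κ - 1) / a + 1 / a ^ 2) - 1 / a = lamStar κ a / a := by
      filter_upwards [eventually_gt_atTop (0:ℝ)] with a ha
      have hnn : 0 ≤ (κ - 1) * a + 1 := by nlinarith
      have hnum : (κ - 1) / a + 1 / a ^ 2 = ((κ - 1) * a + 1) / a ^ 2 := by
        field_simp
      rw [hnum, Real.sqrt_div hnn, Real.sqrt_sq ha.le, lamStar, sub_div]
    have hlim : Tendsto (fun a : ℝ => Real.sqrt ((κ - 1) / a + 1 / a ^ 2) - 1 / a)
        atTop (nhds 0) := by
      have hin : Tendsto (fun a : ℝ => (κ - 1) / a + 1 / a ^ 2) atTop (nhds 0) := by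
        have h1'' : Tendsto (fun a : ℝ => (κ - 1) / a) atTop (nhds 0) :=
          tendsto_const_nhds.div_atTop tendsto_id
        have h2'' : Tendsto (fun a : ℝ => 1 / a ^ 2) atTop (nhds 0) :=
          tendsto_const_nhds.div_atTop (tendsto_pow_atTop (by norm_num))
        simpa using h1''.add h2''
      have hs : Tendsto (fun a : ℝ => Real.sqrt ((κ - 1) / a + 1 / a ^ 2)) atTop
          (nhds 0) := by
        have := (Real.continuous_sqrt.tendsto 0).comp hin
        simpa [Function.comp_def] using this
      simpa using hs.sub hinv
    exact hlim.congr' heq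
  -- C: lamTilde → 1
  have hC : Tendsto (fun a => lamTilde κ a) atTop (nhds 1) := by
    have h1L : Tendsto (fun a => 1 + lamStar κ a) atTop atTop :=
      tendsto_atTop_add_const_left _ 1 hA
    have hinv' : Tendsto (fun a => 1 / (1 + lamStar κ a)) atTop (nhds 0) :=
      tendsto_const_nhds.div_atTop h1L
    have heq : ∀ᶠ a : ℝ in atTop, 1 - 1 / (1 + lamStar κ a) = lamTilde κ a := by
      filter_upwards [hpos2] with a ⟨ha, hl⟩
      have h0 : (1 : ℝ) + lamStar κ a ≠ 0 := by positivity
      rw [lamTilde]; field_simp; ring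
    have : Tendsto (fun a => 1 - 1 / (1 + lamStar κ a)) atTop (nhds 1) := by
      simpa using (tendsto_const_nhds (x := (1:ℝ))).sub hinv'
    exact this.congr' heq
  -- Zstar identity and limit
  have hZs : Tendsto (fun a => Zstar κ a) atTop (nhds (κ - 1)) := by
    have heq : ∀ᶠ a : ℝ in atTop, (κ - 1) - 2 * (lamStar κ a / a) = Zstar κ a := by
      filter_upwards [hpos2] with a ⟨ha, hl⟩
      have hnn : 0 ≤ (κ - 1) * a + 1 := by nlinarith
      have hs2 : Real.sqrt ((κ - 1) * a + 1) ^ 2 = (κ - 1) * a + 1 :=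
        Real.sq_sqrt hnn
      have h1L : (1 : ℝ) + lamStar κ a ≠ 0 := by positivity
      rw [Zstar, lamStar] at *
      field_simp
      nlinarith [hs2]
    have : Tendsto (fun a => (κ - 1) - 2 * (lamStar κ a / a)) atTop (nhds (κ - 1)) := by
      have := (tendsto_const_nhds (x := κ - 1)).sub ((tendsto_const_nhds (x := (2:ℝ))).mul hB)
      simpa using this
    exact this.congr' heq
  -- Ztilde limit
  have hZt : Tendsto (fun a => Ztilde κ a) atTop (nhds ((κ - 1) / 2)) := by
    have heq : ∀ᶠ a : ℝ in atTop,
        lamTilde κ a * ((κ - 1) - lamTilde κ a * (1 / a)) / (1 + lamTilde κ a)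
          = Ztilde κ a := by
      filter_upwards [hpos2] with a ⟨ha, hl⟩
      rw [Ztilde]
      congr 1
      field_simp
      ring
    have hta : Tendsto (fun a => lamTilde κ a * (1 / a)) atTop (nhds 0) := by
      simpa using hC.mul hinv
    have : Tendsto
        (fun a => lamTilde κ a * ((κ - 1) - lamTilde κ a * (1 / a)) / (1 + lamTilde κ a))
        atTop (nhds (1 * ((κ - 1) - 0) / (1 + 1))) := by
      exact (hC.mul ((tendsto_const_nhds (x := κ - 1)).sub hta)).div
        ((tendsto_const_nhds (x := (1:ℝ))).add hC) (by norm_num)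
    rw [show (1 : ℝ) * ((κ - 1) - 0) / (1 + 1) = (κ - 1) / 2 by ring] at this
    exact this.congr' heq
  refine ⟨hZs, hZt, ?_⟩
  have := hZt.div hZs (by linarith)
  rw [show (κ - 1) / 2 / (κ - 1) = 1 / 2 by field_simp] at this
  simpa [Pi.div_def] using this
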